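/- The excess risk of the optimal counterfactually fair regressor equals the variance of A times the expected squared group gap: under a structural model where X = F(U, A) with F(·, a) invertible, A ∈ {0,1} independent of U with P(A=1) = π, and the fair predictor φ_CF(x,a) = P(A=a)·φ*(x,a) + P(A=1-a)·φ*(x_{1-a}, 1-a) with φ*(x,a) = E[Y|X=x, A=a], one has E[(φ_CF(X,A) - Y)²] - E[(φ*(X,A) - Y)²] = π(1-π)·E_U[(E[Y|U, A=1] - E[Y|U, A=0])²]. -/

import Mathlib

open MeasureTheory
open scoped ENNReal

theorem condexp_memLp2 {Ω : Type*} {m m0 : MeasurableSpace Ω} (μ : Measure Ω)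
    [IsProbabilityMeasure μ] (hm : m ≤ m0) {Y : Ω → ℝ} (hY : MemLp Y 2 μ) :
    MemLp (μ[Y|m]) 2 μ := by
  haveI : SigmaFinite (μ.trim hm) := inferInstance
  set Y2 : Lp ℝ 2 μ := hY.toLp Y with hY2
  have hcoe : (Y2 : Ω → ℝ) =ᵐ[μ] Y := hY.coeFn_toLp
  have heq : ((condExpL2 ℝ ℝ hm Y2 : Lp ℝ 2 μ) : Ω → ℝ) =ᵐ[μ] μ[Y|m] := by
    refine ae_eq_condExp_of_forall_setIntegral_eq hm (memLp_one_iff_integrable.mp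
      (hY.mono_exponent (by norm_num))) ?_ ?_ ?_
    · intro s _ _
      exact (memLp_one_iff_integrable.mp ((Lp.memLp _).mono_exponent
        (by norm_num))).integrableOn
    · intro s hs hμs
      rw [integral_condExpL2_eq (𝕜 := ℝ) hm Y2 hs hμs.ne]
      exact setIntegral_congr_ae (hm s hs) (hcoe.mono fun x hx _ => hx)
    · exact aestronglyMeasurable_condExpL2 hm Y2
  exact (Lp.memLp _).ae_eq heq

theorem measurable_invFun {k d : ℕ} (F : EuclideanSpace ℝ (Fin k) → EuclideanSpace ℝ (Fin d))
    (hb : Function.Bijective F) (hm : Measurable F) :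
    Measurable (Function.invFun F) := by
  have hemb : MeasurableEmbedding F := hm.measurableEmbedding hb.injective
  intro s hs
  have : Function.invFun F ⁻¹' s = F '' s := by
    ext x
    constructor
    · intro hx
      exact ⟨_, hx, Function.rightInverse_invFun hb.surjective x⟩
    · rintro ⟨u, hu, rfl⟩
      simpa [Function.leftInverse_invFun hb.injective u] using hu
  rw [this]
  exact hemb.measurableSet_image.mpr hs

theorem meas_uncurry {β γ : Type*} [MeasurableSpace β] [MeasurableSpace γ]
    {f : β → Bool → γ} (hf : ∀ a, Measurable (f · a)) :
    Measurable (fun xa : β × Bool => f xa.1 xa.2) := by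
  have : (fun xa : β × Bool => f xa.1 xa.2)
      = fun xa : β × Bool => if xa.2 = true then f xa.1 true else f xa.1 false := by
    funext ⟨x, a⟩; cases a <;> simp
  rw [this]
  exact Measurable.ite (measurable_snd (measurableSet_singleton true))
    ((hf true).comp measurable_fst) ((hf false).comp measurable_fst)

theorem lintegral_bool_indicator {Ω : Type*} [MeasurableSpace Ω] (μ : Measure Ω)
    {A : Ω → Bool} (hA : Measurable A) (a : Bool) :
    ∫⁻ ω, (if A ω = a then (1:ℝ≥0∞) else 0) ∂μ = μ {ω | A ω = a} := by
  have : (fun ω => if A ω = a then (1:ℝ≥0∞) else 0)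
      = Set.indicator {ω | A ω = a} (1 : Ω → ℝ≥0∞) := by
    funext ω; by_cases h : A ω = a <;> simp [Set.indicator_apply, h]
  rw [this]
  exact lintegral_indicator_one (hA (measurableSet_singleton a))

theorem memLp2_of_indep {Ω α : Type*} [MeasurableSpace Ω] [MeasurableSpace α]
    (μ : Measure Ω) [IsProbabilityMeasure μ]
    {U : Ω → α} {A : Ω → Bool} (hU : Measurable U) (hA : Measurable A)
    (hInd : ProbabilityTheory.IndepFun U A μ)
    {w : α → ℝ} (hw : Measurable w) {φ : Ω → ℝ} (hφ : MemLp φ 2 μ) (a : Bool)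
    (h0 : μ {ω | A ω = a} ≠ 0) (hag : ∀ ω, A ω = a → w (U ω) = φ ω) :
    MemLp (fun ω => w (U ω)) 2 μ := by
  have hgm : Measurable fun ω => w (U ω) := hw.comp hU
  rw [memLp_two_iff_integrable_sq hgm.aestronglyMeasurable]
  refine ⟨(hgm.pow_const 2).aestronglyMeasurable, ?_⟩
  have hsq := hφ.integrable_sq
  have hfin : ∫⁻ ω, (‖φ ω ^ 2‖₊ : ℝ≥0∞) ∂μ < ⊤ := hsq.2
  have hind2 : ProbabilityTheory.IndepFun
      (fun ω => (‖w (U ω) ^ 2‖₊ : ℝ≥0∞))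
      (fun ω => if A ω = a then (1:ℝ≥0∞) else 0) μ :=
    hInd.comp (φ := fun u => (‖w u ^ 2‖₊ : ℝ≥0∞))
      (ψ := fun b => if b = a then (1:ℝ≥0∞) else 0)
      (measurable_coe_nnreal_ennreal.comp ((hw.pow_const 2).nnnorm))
      (measurable_of_countable _)
  have key := ProbabilityTheory.lintegral_mul_eq_lintegral_mul_lintegral_of_indepFun
    (μ := μ) (f := fun ω => (‖w (U ω) ^ 2‖₊ : ℝ≥0∞))
    (g := fun ω => if A ω = a then (1:ℝ≥0∞) else 0)
    ((measurable_coe_nnreal_ennreal.comp ((hw.pow_const 2).nnnorm)).comp hU)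
    (measurable_of_countable (fun b => if b = a then (1:ℝ≥0∞) else 0) |>.comp hA) hind2
  rw [lintegral_bool_indicator μ hA a] at key
  have hle : ∫⁻ ω, ((fun ω => (‖w (U ω) ^ 2‖₊ : ℝ≥0∞)) *
      fun ω => if A ω = a then (1:ℝ≥0∞) else 0) ω ∂μ
      ≤ ∫⁻ ω, (‖φ ω ^ 2‖₊ : ℝ≥0∞) ∂μ := by
    refine lintegral_mono fun ω => ?_
    by_cases h : A ω = a
    · simp [Pi.mul_apply, h, hag ω h]
    · simp [Pi.mul_apply, h]
  rw [key] at hle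
  have : ∫⁻ ω, (‖w (U ω) ^ 2‖₊ : ℝ≥0∞) ∂μ < ⊤ := by
    by_contra hcon
    push_neg at hcon
    rw [top_le_iff.mp hcon, ENNReal.top_mul h0] at hle
    exact absurd (top_le_iff.mp hle) hfin.ne
  exact this

theorem integral_indep_indicator_mul {Ω α : Type*} [mΩ' : MeasurableSpace Ω] [MeasurableSpace α]
    (μ : Measure Ω) [IsProbabilityMeasure μ]
    {U : Ω → α} {A : Ω → Bool} (hA : Measurable A)
    (hInd : ProbabilityTheory.IndepFun U A μ)
    {w : α → ℝ} (hw : Measurable w) (hint : Integrable (fun ω => w (U ω)) μ) (a : Bool) :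
    ∫ ω, (if A ω = a then w (U ω) else 0) ∂μ
      = (μ {ω | A ω = a}).toReal * ∫ ω, w (U ω) ∂μ := by
  have hAset := hA (measurableSet_singleton a)
  have hiota_eq : (fun ω => if A ω = a then (1:ℝ) else 0)
      = Set.indicator {ω | A ω = a} (fun _ => (1:ℝ)) := by
    funext ω; by_cases h : A ω = a <;> simp [Set.indicator_apply, h]
  have hiota_int : Integrable (fun ω => if A ω = a then (1:ℝ) else 0) μ := by
    rw [hiota_eq]; exact (integrable_const (1:ℝ)).indicator hAset
  have hind2 : ProbabilityTheory.IndepFun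
      (fun ω => if A ω = a then (1:ℝ) else 0) (fun ω => w (U ω)) μ :=
    hInd.symm.comp (φ := fun b => if b = a then (1:ℝ) else 0) (ψ := w)
      (measurable_of_countable _) hw
  have key := hind2.integral_mul_eq_mul_integral hiota_int.aestronglyMeasurable hint.aestronglyMeasurable
  have h1 : (fun ω => (if A ω = a then (1:ℝ) else 0) * w (U ω))
      = fun ω => if A ω = a then w (U ω) else 0 := by
    funext ω; by_cases h : A ω = a <;> simp [h]
  have h2 : ∫ ω, (if A ω = a then (1:ℝ) else 0) ∂μ = (μ {ω | A ω = a}).toReal := by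
    rw [hiota_eq]
    have := integral_indicator_const (μ := μ) (1:ℝ) hAset
    simp [Measure.real_def] at this; exact this
  calc ∫ ω, (if A ω = a then w (U ω) else 0) ∂μ
      = ∫ ω, ((fun ω => if A ω = a then (1:ℝ) else 0) * fun ω => w (U ω)) ω ∂μ := by
        simp only [Pi.mul_apply]; rw [← h1]
    _ = (μ {ω | A ω = a}).toReal * ∫ ω, w (U ω) ∂μ := by rw [key, h2]

theorem main_aux {Ω α : Type*} [mΩ : MeasurableSpace Ω] (μ : Measure Ω)
    [IsProbabilityMeasure μ] [MeasurableSpace α]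
    {U : Ω → α} {A : Ω → Bool} (hU : Measurable U) (hA : Measurable A)
    (hInd : ProbabilityTheory.IndepFun U A μ)
    {g h : α → ℝ} (hg : Measurable g) (hh : Measurable h)
    {Y : Ω → ℝ} (hY : MemLp Y 2 μ)
    {φf : Ω → ℝ} (hφ2 : MemLp φf 2 μ)
    (hg2 : MemLp (fun ω => g (U ω)) 2 μ) (hh2 : MemLp (fun ω => h (U ω)) 2 μ)
    {p q : ℝ} (hp : p = (μ {ω | A ω = true}).toReal) (hq : q = (μ {ω | A ω = false}).toReal)
    (hpq : p + q = 1)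
    (m : MeasurableSpace Ω) (hm : m ≤ mΩ)
    (hZm : StronglyMeasurable[m] (fun ω => (p * g (U ω) + q * h (U ω)) - φf ω))
    (hcond' : φf =ᵐ[μ] μ[Y|m])
    (hφf_eq : ∀ ω, φf ω = if A ω = true then g (U ω) else h (U ω)) :
    ∫ ω, ((p * g (U ω) + q * h (U ω)) - Y ω) ^ 2 ∂μ - ∫ ω, (φf ω - Y ω) ^ 2 ∂μ
      = p * q * ∫ ω, (g (U ω) - h (U ω)) ^ 2 ∂μ := by
  haveI : SigmaFinite (μ.trim hm) := inferInstance
  have hY1 : Integrable Y μ :=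
    memLp_one_iff_integrable.mp (hY.mono_exponent (by norm_num))
  have hc2 : MemLp (fun ω => p * g (U ω) + q * h (U ω)) 2 μ :=
    ((hg2.const_mul p).add (hh2.const_mul q))
  have hZ2 : MemLp (fun ω => (p * g (U ω) + q * h (U ω)) - φf ω) 2 μ := hc2.sub hφ2
  have hφY2 : MemLp (fun ω => φf ω - Y ω) 2 μ := hφ2.sub hY
  have hW2 : MemLp (fun ω => g (U ω) - h (U ω)) 2 μ := hg2.sub hh2
  have hWint : Integrable (fun ω => (g (U ω) - h (U ω)) ^ 2) μ := hW2.integrable_sq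
  have hmul : ∀ {f₁ f₂ : Ω → ℝ}, MemLp f₁ 2 μ → MemLp f₂ 2 μ →
      Integrable (fun ω => f₁ ω * f₂ ω) μ := by
    intro f₁ f₂ h1 h2
    have h3 : (1:ℝ≥0∞)/1 = 1/2 + 1/2 := by
      rw [ENNReal.add_halves, one_div_one]
    have := h2.smul (𝕜 := ℝ) h1 (r := 1)
    rw [smul_eq_mul] at this
    exact memLp_one_iff_integrable.mp this
  set Z : Ω → ℝ := fun ω => (p * g (U ω) + q * h (U ω)) - φf ω with hZdef
  have hZY_int : Integrable (fun ω => Z ω * Y ω) μ := hmul hZ2 hY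
  have hZφ_int : Integrable (fun ω => Z ω * φf ω) μ := hmul hZ2 hφ2
  have hZw_int : Integrable (fun ω => Z ω * (φf ω - Y ω)) μ := hmul hZ2 hφY2
  have hZsq : Integrable (fun ω => Z ω ^ 2) μ := hZ2.integrable_sq
  have hφYsq : Integrable (fun ω => (φf ω - Y ω) ^ 2) μ := hφY2.integrable_sq
  -- cross term vanishes
  have hZY_int' : Integrable (Z * Y) μ := by
    have : Z * Y = fun ω => Z ω * Y ω := rfl
    rw [this]; exact hZY_int
  have hpull : μ[Z * Y|m] =ᵐ[μ] Z * μ[Y|m] :=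
    condExp_mul_of_stronglyMeasurable_left hZm hZY_int' hY1
  have hcross : ∫ ω, Z ω * (φf ω - Y ω) ∂μ = 0 := by
    have h1 : ∫ ω, Z ω * φf ω ∂μ = ∫ ω, Z ω * Y ω ∂μ := by
      have e1 : (fun ω => Z ω * φf ω) =ᵐ[μ] fun ω => Z ω * (μ[Y|m]) ω := by
        filter_upwards [hcond'] with ω hω
        show Z ω * φf ω = Z ω * (μ[Y|m]) ω
        rw [hω]
      have e2 : ∫ ω, (Z * μ[Y|m]) ω ∂μ = ∫ ω, (μ[Z * Y|m]) ω ∂μ :=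
        (integral_congr_ae hpull).symm
      rw [integral_congr_ae e1]
      calc ∫ ω, Z ω * (μ[Y|m]) ω ∂μ = ∫ ω, (Z * μ[Y|m]) ω ∂μ := rfl
        _ = ∫ ω, (μ[Z * Y|m]) ω ∂μ := e2
        _ = ∫ ω, (Z * Y) ω ∂μ := integral_condExp hm
        _ = ∫ ω, Z ω * Y ω ∂μ := rfl
    have e3 : (fun ω => Z ω * (φf ω - Y ω)) = fun ω => Z ω * φf ω - Z ω * Y ω :=
      funext fun ω => by ring
    rw [e3, integral_sub hZφ_int hZY_int, h1, sub_self]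
  -- decomposition
  have e : (fun ω => ((p * g (U ω) + q * h (U ω)) - Y ω) ^ 2)
      = fun ω => Z ω ^ 2 + (2 * (Z ω * (φf ω - Y ω)) + (φf ω - Y ω) ^ 2) := by
    funext ω
    show _ = ((p * g (U ω) + q * h (U ω)) - φf ω) ^ 2 + _
    ring
  have hsum2 : Integrable (fun ω => 2 * (Z ω * (φf ω - Y ω)) + (φf ω - Y ω) ^ 2) μ :=
    (hZw_int.const_mul 2).add hφYsq
  have hdecomp : ∫ ω, ((p * g (U ω) + q * h (U ω)) - Y ω) ^ 2 ∂μ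
      = ∫ ω, Z ω ^ 2 ∂μ + ∫ ω, (φf ω - Y ω) ^ 2 ∂μ := by
    rw [e, integral_add hZsq hsum2,
      integral_add (hZw_int.const_mul 2) hφYsq, integral_const_mul, hcross]
    ring
  -- compute ∫ Z²
  have hWmeas : Measurable fun u => (g u - h u) ^ 2 := (hg.sub hh).pow_const 2
  have hIT : ∫ ω, (if A ω = true then (g (U ω) - h (U ω)) ^ 2 else 0) ∂μ
      = (μ {ω | A ω = true}).toReal * ∫ ω, (g (U ω) - h (U ω)) ^ 2 ∂μ :=
    integral_indep_indicator_mul (mΩ' := mΩ) μ hA hInd hWmeas hWint true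
  have hIF : ∫ ω, (if A ω = false then (g (U ω) - h (U ω)) ^ 2 else 0) ∂μ
      = (μ {ω | A ω = false}).toReal * ∫ ω, (g (U ω) - h (U ω)) ^ 2 ∂μ :=
    integral_indep_indicator_mul (mΩ' := mΩ) μ hA hInd hWmeas hWint false
  have hIint : ∀ a : Bool,
      Integrable (fun ω => if A ω = a then (g (U ω) - h (U ω)) ^ 2 else 0) μ := by
    intro a
    refine hWint.mono ((Measurable.ite (hA (measurableSet_singleton a))
      (hWmeas.comp hU) measurable_const)).aestronglyMeasurable ?_
    filter_upwards with ω
    by_cases hω : A ω = a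
    · simp [hω]
    · rw [if_neg hω]
      simp only [norm_zero, Real.norm_eq_abs]
      positivity
  have hZsq_eq : (fun ω => Z ω ^ 2) = fun ω =>
      q ^ 2 * (if A ω = true then (g (U ω) - h (U ω)) ^ 2 else 0)
      + p ^ 2 * (if A ω = false then (g (U ω) - h (U ω)) ^ 2 else 0) := by
    funext ω
    have hq1 : q = 1 - p := by linarith
    show ((p * g (U ω) + q * h (U ω)) - φf ω) ^ 2 = _
    rw [hφf_eq ω]
    cases hAa : A ω
    · simp only [hAa, Bool.false_eq_true, if_false, if_pos, mul_zero, add_zero, zero_add]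
      rw [hq1]; ring
    · simp only [hAa, if_true, Bool.true_eq_false, if_false, mul_zero, add_zero]
      rw [hq1]; ring
  rw [hdecomp, add_sub_cancel_right, hZsq_eq,
    integral_add ((hIint true).const_mul _) ((hIint false).const_mul _),
    integral_const_mul, integral_const_mul, hIT, hIF, ← hp, ← hq]
  have : q ^ 2 * (p * ∫ ω, (g (U ω) - h (U ω)) ^ 2 ∂μ)
      + p ^ 2 * (q * ∫ ω, (g (U ω) - h (U ω)) ^ 2 ∂μ)
      = p * q * (∫ ω, (g (U ω) - h (U ω)) ^ 2 ∂μ) * (p + q) := by ring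
  rw [this, hpq, mul_one]

/-- Excess risk of the optimal counterfactually fair regressor: under a structural model
`X = F(U, A)` with `F(·,a)` invertible and `A ⊥ U`, the fair predictor
`φ_CF(x,a) = P(A=a)·φ*(x,a) + P(A=1-a)·φ*(x_{1-a}, 1-a)` (with `φ*(x,a) = E[Y|X=x,A=a]`
and `x_{1-a} = F(F⁻¹(x,a), 1-a)`) satisfies
`E[(φ_CF(X,A) - Y)²] - E[(φ*(X,A) - Y)²] = π(1-π)·E_U[(E[Y|U,A=1] - E[Y|U,A=0])²]`. -/
theorem excess_risk_of_optimal_counterfactually_fair_regressor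
    {Ω : Type*} [MeasurableSpace Ω] (μ : Measure Ω) [IsProbabilityMeasure μ]
    {k d : ℕ}
    (U : Ω → EuclideanSpace ℝ (Fin k)) (A : Ω → Bool)
    (hU : Measurable U) (hA : Measurable A)
    (hInd : ProbabilityTheory.IndepFun U A μ)
    (F : EuclideanSpace ℝ (Fin k) → Bool → EuclideanSpace ℝ (Fin d))
    (hFbij : ∀ a, Function.Bijective (F · a))
    (hFmeas : ∀ a, Measurable (F · a))
    (X : Ω → EuclideanSpace ℝ (Fin d)) (hX : ∀ ω, X ω = F (U ω) (A ω))
    (Y : Ω → ℝ) (hY : MemLp Y 2 μ)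
    (φstar : EuclideanSpace ℝ (Fin d) → Bool → ℝ) (hφm : ∀ a, Measurable (φstar · a))
    (hcond : (fun ω => φstar (X ω) (A ω)) =ᵐ[μ]
      μ[Y | MeasurableSpace.comap (fun ω => (X ω, A ω)) inferInstance]) :
    ∫ ω, (((μ {ω' | A ω' = A ω}).toReal * φstar (X ω) (A ω)
          + (μ {ω' | A ω' = !(A ω)}).toReal * φstar (F (U ω) (!(A ω))) (!(A ω)))
        - Y ω) ^ 2 ∂μ
      - ∫ ω, (φstar (X ω) (A ω) - Y ω) ^ 2 ∂μ
    = (μ {ω | A ω = true}).toReal * (μ {ω | A ω = false}).toReal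
        * ∫ ω, (φstar (F (U ω) true) true - φstar (F (U ω) false) false) ^ 2 ∂μ := by
  have hsT : MeasurableSet {ω | A ω = true} := hA (measurableSet_singleton true)
  have hsF : MeasurableSet {ω | A ω = false} := hA (measurableSet_singleton false)
  have hXm : Measurable X := by
    have h1 : Measurable (fun xa : EuclideanSpace ℝ (Fin k) × Bool => F xa.1 xa.2) :=
      meas_uncurry hFmeas
    have h2 : X = fun ω => F (U ω) (A ω) := funext hX
    rw [h2]; exact h1.comp (hU.prodMk hA)
  have hm : MeasurableSpace.comap (fun ω => (X ω, A ω)) inferInstance ≤ ‹MeasurableSpace Ω› :=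
    (hXm.prodMk hA).comap_le
  have hφ2 : MemLp (fun ω => φstar (X ω) (A ω)) 2 μ :=
    MemLp.ae_eq hcond.symm (condexp_memLp2 μ hm hY)
  by_cases hp0 : μ {ω | A ω = true} = 0
  · have hq1 : μ {ω | A ω = false} = 1 := by
      have hqc : {ω | A ω = false} = {ω | A ω = true}ᶜ := by
        ext ω; cases hω : A ω <;> simp [hω]
      rw [hqc, measure_compl hsT (measure_ne_top μ _), hp0, measure_univ, tsub_zero]
    have hae : ∀ᵐ ω ∂μ, A ω = false := by
      rw [ae_iff]
      convert hp0 using 2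
      ext ω; cases hω : A ω <;> simp [hω]
    have hEq : (fun ω => (((μ {ω' | A ω' = A ω}).toReal * φstar (X ω) (A ω)
          + (μ {ω' | A ω' = !(A ω)}).toReal * φstar (F (U ω) (!(A ω))) (!(A ω)))
        - Y ω) ^ 2)
        =ᵐ[μ] fun ω => (φstar (X ω) (A ω) - Y ω) ^ 2 := by
      filter_upwards [hae] with ω hω
      simp only [hω, Bool.not_false, hp0, hq1, ENNReal.toReal_one, ENNReal.toReal_zero,
        zero_mul, one_mul, add_zero]
    rw [integral_congr_ae hEq, sub_self, hp0]
    simp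
  by_cases hq0 : μ {ω | A ω = false} = 0
  · have hp1 : μ {ω | A ω = true} = 1 := by
      have hpc : {ω | A ω = true} = {ω | A ω = false}ᶜ := by
        ext ω; cases hω : A ω <;> simp [hω]
      rw [hpc, measure_compl hsF (measure_ne_top μ _), hq0, measure_univ, tsub_zero]
    have hae : ∀ᵐ ω ∂μ, A ω = true := by
      rw [ae_iff]
      convert hq0 using 2
      ext ω; cases hω : A ω <;> simp [hω]
    have hEq : (fun ω => (((μ {ω' | A ω' = A ω}).toReal * φstar (X ω) (A ω)
          + (μ {ω' | A ω' = !(A ω)}).toReal * φstar (F (U ω) (!(A ω))) (!(A ω)))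
        - Y ω) ^ 2)
        =ᵐ[μ] fun ω => (φstar (X ω) (A ω) - Y ω) ^ 2 := by
      filter_upwards [hae] with ω hω
      simp only [hω, Bool.not_true, hp1, hq0, ENNReal.toReal_one, ENNReal.toReal_zero,
        zero_mul, one_mul, add_zero]
    rw [integral_congr_ae hEq, sub_self, hq0]
    simp
  -- main case
  have hgw : Measurable (fun u : EuclideanSpace ℝ (Fin k) => φstar (F u true) true) :=
    (hφm true).comp (hFmeas true)
  have hhw : Measurable (fun u : EuclideanSpace ℝ (Fin k) => φstar (F u false) false) :=
    (hφm false).comp (hFmeas false)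
  have hg2 : MemLp (fun ω => φstar (F (U ω) true) true) 2 μ :=
    memLp2_of_indep μ hU hA hInd hgw hφ2 true hp0 (fun ω hω => by rw [hX ω, hω])
  have hh2 : MemLp (fun ω => φstar (F (U ω) false) false) 2 μ :=
    memLp2_of_indep μ hU hA hInd hhw hφ2 false hq0 (fun ω hω => by rw [hX ω, hω])
  have hpq : (μ {ω | A ω = true}).toReal + (μ {ω | A ω = false}).toReal = 1 := by
    have hqc : {ω | A ω = false} = {ω | A ω = true}ᶜ := by
      ext ω; cases hω : A ω <;> simp [hω]
    rw [hqc, measure_compl hsT (measure_ne_top μ _), measure_univ,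
      ENNReal.toReal_sub_of_le prob_le_one ENNReal.one_ne_top, ENNReal.toReal_one]
    ring
  have hGinv : ∀ a, Measurable (fun x : EuclideanSpace ℝ (Fin d) => Function.invFun (F · a) x) :=
    fun a => measurable_invFun (F · a) (hFbij a) (hFmeas a)
  have hv : Measurable (fun xa : EuclideanSpace ℝ (Fin d) × Bool =>
      Function.invFun (F · xa.2) xa.1) :=
    meas_uncurry (f := fun x a => Function.invFun (F · a) x) hGinv
  have hζ : Measurable (fun xa : EuclideanSpace ℝ (Fin d) × Bool =>
      ((μ {ω | A ω = true}).toReal * φstar (F (Function.invFun (F · xa.2) xa.1) true) true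
        + (μ {ω | A ω = false}).toReal * φstar (F (Function.invFun (F · xa.2) xa.1) false) false)
      - φstar xa.1 xa.2) :=
    ((((hφm true).comp ((hFmeas true).comp hv)).const_mul _).add
      (((hφm false).comp ((hFmeas false).comp hv)).const_mul _)).sub (meas_uncurry hφm)
  have hinv_eq : ∀ ω, Function.invFun (F · (A ω)) (X ω) = U ω := fun ω => by
    rw [hX ω]; exact Function.leftInverse_invFun (hFbij (A ω)).injective (U ω)
  have hZm : StronglyMeasurable[MeasurableSpace.comap (fun ω => (X ω, A ω)) inferInstance]
      (fun ω => ((μ {ω | A ω = true}).toReal * φstar (F (U ω) true) true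
          + (μ {ω | A ω = false}).toReal * φstar (F (U ω) false) false)
        - φstar (X ω) (A ω)) := by
    have h1 : Measurable[MeasurableSpace.comap (fun ω => (X ω, A ω)) inferInstance]
        (fun ω => (X ω, A ω)) := Measurable.of_comap_le le_rfl
    have h2 := hζ.comp h1
    have h3 : ((fun xa : EuclideanSpace ℝ (Fin d) × Bool =>
        ((μ {ω | A ω = true}).toReal * φstar (F (Function.invFun (F · xa.2) xa.1) true) true
          + (μ {ω | A ω = false}).toReal
            * φstar (F (Function.invFun (F · xa.2) xa.1) false) false)
        - φstar xa.1 xa.2) ∘ (fun ω => (X ω, A ω)))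
        = fun ω => ((μ {ω | A ω = true}).toReal * φstar (F (U ω) true) true
          + (μ {ω | A ω = false}).toReal * φstar (F (U ω) false) false)
        - φstar (X ω) (A ω) := by
      funext ω
      simp only [Function.comp_apply]
      rw [hinv_eq ω]
    exact h3 ▸ h2.stronglyMeasurable
  have hφf_eq : ∀ ω, φstar (X ω) (A ω)
      = if A ω = true then φstar (F (U ω) true) true else φstar (F (U ω) false) false :=
    fun ω => by cases hAa : A ω <;> simp [hX ω, hAa]
  have hgoal1 : (fun ω => (((μ {ω' | A ω' = A ω}).toReal * φstar (X ω) (A ω)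
          + (μ {ω' | A ω' = !(A ω)}).toReal * φstar (F (U ω) (!(A ω))) (!(A ω)))
        - Y ω) ^ 2)
      = fun ω => (((μ {ω | A ω = true}).toReal * φstar (F (U ω) true) true
          + (μ {ω | A ω = false}).toReal * φstar (F (U ω) false) false) - Y ω) ^ 2 := by
    funext ω
    cases hAa : A ω <;> simp only [hAa, Bool.not_false, Bool.not_true, hX ω] <;> ring
  rw [hgoal1]
  exact main_aux μ hU hA hInd hgw hhw hY hφ2 hg2 hh2 rfl rfl hpq _ hm hZm hcond hφf_eq
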